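/- Suppose w₀ ∈ C⁰(Ω̄) is a nonnegative function satisfying ∫_Ω (d_x²/d) w₀ < ∞. Then w₀(x) = 0 for every x ∈ Ω̄ with d(x) = 0. -/

import Mathlib

open MeasureTheory Set

private lemma key_side
    (a b : ℝ) (hab : a < b)
    (d : ℝ → ℝ)
    (hd_cont : ContinuousOn d (Set.Icc a b))
    (hd_nonneg : ∀ x ∈ Set.Icc a b, 0 ≤ d x)
    (hd_C1 : ContDiffOn ℝ 1 d {x ∈ Set.Icc a b | 0 < d x})
    (hd_int : (∫⁻ x in Set.Ioo a b, (ENNReal.ofReal (d x))⁻¹) < ⊤)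
    (w₀ : ℝ → ℝ)
    (hw₀_cont : ContinuousOn w₀ (Set.Icc a b))
    (hw₀_nonneg : ∀ x ∈ Set.Icc a b, 0 ≤ w₀ x)
    (hw₀d : (∫⁻ x in Set.Ioo a b, ENNReal.ofReal ((deriv d x) ^ 2 / d x * w₀ x)) < ⊤)
    (x₀ : ℝ) (hx₀ : x₀ ∈ Set.Icc a b) (hx₀b : x₀ < b) (hd0 : d x₀ = 0) :
    w₀ x₀ = 0 := by
  by_contra hne
  have hε : 0 < w₀ x₀ := (hw₀_nonneg x₀ hx₀).lt_of_ne (Ne.symm hne)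
  set ε := w₀ x₀ with hεdef
  obtain ⟨δ, hδpos, hδ⟩ : ∃ δ > 0, ∀ y ∈ Icc a b, |y - x₀| < δ → ε / 2 ≤ w₀ y := by
    have hc := Metric.continuousWithinAt_iff.1 (hw₀_cont x₀ hx₀)
    obtain ⟨δ, hδpos, hδ⟩ := hc (ε / 2) (by positivity)
    refine ⟨δ, hδpos, fun y hy hyd => ?_⟩
    have := hδ hy (by simpa [Real.dist_eq] using hyd)
    rw [Real.dist_eq] at this
    have := abs_lt.1 this
    linarith [this.1]
  set t := min b (x₀ + δ) with ht
  have hx₀t : x₀ < t := lt_min hx₀b (by linarith)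
  have htb : t ≤ b := min_le_left _ _
  have htδ : t ≤ x₀ + δ := min_le_right _ _
  set M := ∫⁻ x in Set.Ioo a b, ENNReal.ofReal ((deriv d x) ^ 2 / d x * w₀ x) with hMdef
  have hM : M < ⊤ := hw₀d
  set A := M.toReal / (2 * ε) with hAdef
  have hA0 : 0 ≤ A := div_nonneg ENNReal.toReal_nonneg (by positivity)
  set K := (1 + A) ^ 2 / 4 with hKdef
  have hKpos : 0 < K := by positivity
  -- key claim
  have hclaim : ∀ y ∈ Ioo x₀ t, d y ≤ K * (y - x₀) := by
    intro y hy
    have hysub : y ∈ Icc a b := ⟨hx₀.1.trans hy.1.le, (hy.2.le.trans htb)⟩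
    rcases (hd_nonneg y hysub).eq_or_lt with hdy | hdy
    · rw [← hdy]
      have : 0 < y - x₀ := by linarith [hy.1]
      positivity
    -- now d y > 0
    set S : Set ℝ := Icc x₀ y ∩ d ⁻¹' {0} with hSdef
    have hx₀y : x₀ ≤ y := hy.1.le
    have hIccsub : Icc x₀ y ⊆ Icc a b := Icc_subset_Icc hx₀.1 hysub.2
    have hSclosed : IsClosed S :=
      (hd_cont.mono hIccsub).preimage_isClosed_of_isClosed isClosed_Icc isClosed_singleton
    have hSne : S.Nonempty := ⟨x₀, ⟨le_refl _, hx₀y⟩, hd0⟩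
    have hSbdd : BddAbove S := ⟨y, fun s hs => hs.1.2⟩
    set z := sSup S with hzdef
    have hzS : z ∈ S := hSclosed.csSup_mem hSne hSbdd
    have hzx₀ : x₀ ≤ z := hzS.1.1
    have hdz : d z = 0 := hzS.2
    have hzy : z < y := lt_of_le_of_ne hzS.1.2 (fun h => by
      rw [h] at hdz; exact hdy.ne' hdz)
    have hsub2 : Ioc z y ⊆ Icc a b := fun s hs =>
      ⟨hx₀.1.trans (hzx₀.trans hs.1.le), hs.2.trans hysub.2⟩
    have hsub3 : Ioc z y ⊆ Ioo a b := fun s hs =>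
      ⟨(hx₀.1.trans hzx₀).trans_lt hs.1, hs.2.trans_lt (hy.2.trans_le htb)⟩
    have hpos : ∀ s ∈ Ioc z y, 0 < d s := by
      intro s hs
      rcases (hd_nonneg s (hsub2 hs)).eq_or_lt with h | h
      · exfalso
        have hsS : s ∈ S := ⟨⟨hzx₀.trans hs.1.le, hs.2⟩, h.symm⟩
        exact absurd (le_csSup hSbdd hsS) (not_le.mpr hs.1)
      · exact h
    set g : ℝ → ℝ := fun s => deriv d s / (2 * Real.sqrt (d s)) with hgdef
    have hderiv : ∀ s ∈ Ioo z y, HasDerivAt (fun u => Real.sqrt (d u)) (g s) s := by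
      intro s hs
      have hsmem : s ∈ Ioc z y := Ioo_subset_Ioc_self hs
      have hV : IsOpen (Ioo a b ∩ d ⁻¹' Ioi 0) :=
        (hd_cont.mono Ioo_subset_Icc_self).isOpen_inter_preimage isOpen_Ioo isOpen_Ioi
      have hsV : s ∈ Ioo a b ∩ d ⁻¹' Ioi 0 := ⟨hsub3 hsmem, hpos s hsmem⟩
      have hVsub : (Ioo a b ∩ d ⁻¹' Ioi 0) ⊆ {x ∈ Icc a b | 0 < d x} :=
        fun v hv => ⟨Ioo_subset_Icc_self hv.1, hv.2⟩
      have hdd : DifferentiableAt ℝ d s :=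
        (((hd_C1.mono hVsub).differentiableOn one_ne_zero).differentiableAt (hV.mem_nhds hsV))
      exact hdd.hasDerivAt.sqrt (hpos s hsmem).ne'
    have hwlow : ∀ s ∈ Ioc z y, ε / 2 ≤ w₀ s := by
      intro s hs
      refine hδ s (hsub2 hs) ?_
      rw [abs_of_nonneg (by linarith [hzx₀.trans hs.1.le] : (0:ℝ) ≤ s - x₀)]
      have hsy : s ≤ y := hs.2
      linarith [hy.2, htδ]
    have hgsq : ∀ s ∈ Ioc z y, (g s) ^ 2 ≤ 1 / (2 * ε) * (deriv d s ^ 2 / d s * w₀ s) := by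
      intro s hs
      have hds : 0 < d s := hpos s hs
      have hsq : Real.sqrt (d s) ^ 2 = d s := Real.sq_sqrt hds.le
      have hg2 : (g s) ^ 2 = deriv d s ^ 2 / (4 * d s) := by
        simp only [hgdef, div_pow, mul_pow, hsq]
        norm_num
      rw [hg2]
      have hw := hwlow s hs
      have hD : 0 ≤ deriv d s ^ 2 := sq_nonneg _
      calc deriv d s ^ 2 / (4 * d s)
          = 1 / (2 * ε) * (deriv d s ^ 2 / d s * (ε / 2)) := by
            field_simp
            ring
        _ ≤ 1 / (2 * ε) * (deriv d s ^ 2 / d s * w₀ s) := by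
            refine mul_le_mul_of_nonneg_left ?_ (by positivity)
            exact mul_le_mul_of_nonneg_left hw (div_nonneg hD hds.le)
    have hW : ∫⁻ s in Ioc z y, ENNReal.ofReal ((g s) ^ 2)
        ≤ ENNReal.ofReal (1 / (2 * ε)) * M := by
      calc ∫⁻ s in Ioc z y, ENNReal.ofReal ((g s) ^ 2)
          ≤ ∫⁻ s in Ioc z y, ENNReal.ofReal (1 / (2 * ε))
              * ENNReal.ofReal (deriv d s ^ 2 / d s * w₀ s) := by
            refine setLIntegral_mono' measurableSet_Ioc (fun s hs => ?_)
            rw [← ENNReal.ofReal_mul (by positivity)]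
            exact ENNReal.ofReal_le_ofReal (hgsq s hs)
        _ = ENNReal.ofReal (1 / (2 * ε))
              * ∫⁻ s in Ioc z y, ENNReal.ofReal (deriv d s ^ 2 / d s * w₀ s) :=
            lintegral_const_mul' _ _ ENNReal.ofReal_ne_top
        _ ≤ ENNReal.ofReal (1 / (2 * ε)) * M := by
            gcongr
            exact lintegral_mono_set hsub3
    set u := y - x₀ with hudef
    have hu : 0 < u := sub_pos.mpr hy.1
    set c := (Real.sqrt u)⁻¹ with hcdef
    have hsu : 0 < Real.sqrt u := Real.sqrt_pos.mpr hu
    have hc : 0 < c := inv_pos.mpr hsu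
    have habs : ∀ s, |g s| ≤ c / 2 + (g s) ^ 2 / (2 * c) := by
      intro s
      have h2 : |g s| * (2 * c) ≤ c ^ 2 + (g s) ^ 2 := by
        nlinarith [sq_nonneg (|g s| - c), sq_abs (g s)]
      have h3 := (le_div_iff₀ (by positivity : (0:ℝ) < 2 * c)).mpr h2
      calc |g s| ≤ (c ^ 2 + (g s) ^ 2) / (2 * c) := h3
        _ = c / 2 + (g s) ^ 2 / (2 * c) := by field_simp
    have hcu : c / 2 * u = Real.sqrt u / 2 := by
      rw [hcdef, div_mul_eq_mul_div, inv_mul_eq_div, Real.div_sqrt]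
    have h2c : 1 / (2 * c) = Real.sqrt u / 2 := by
      rw [hcdef]
      field_simp
    have hA' : 1 / (2 * ε) * M.toReal = A := by rw [hAdef]; ring
    have hIle : ∫⁻ s in Ioc z y, ENNReal.ofReal |g s|
        ≤ ENNReal.ofReal (Real.sqrt u / 2 * (1 + A)) := by
      calc ∫⁻ s in Ioc z y, ENNReal.ofReal |g s|
          ≤ ∫⁻ s in Ioc z y, (ENNReal.ofReal (c / 2)
              + ENNReal.ofReal (1 / (2 * c)) * ENNReal.ofReal ((g s) ^ 2)) := by
            refine setLIntegral_mono' measurableSet_Ioc (fun s hs => ?_)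
            rw [← ENNReal.ofReal_mul (by positivity),
              ← ENNReal.ofReal_add (by positivity) (by positivity)]
            refine ENNReal.ofReal_le_ofReal ?_
            calc |g s| ≤ c / 2 + (g s) ^ 2 / (2 * c) := habs s
              _ = c / 2 + 1 / (2 * c) * (g s) ^ 2 := by ring
        _ = ENNReal.ofReal (c / 2) * volume (Ioc z y)
              + ENNReal.ofReal (1 / (2 * c)) * ∫⁻ s in Ioc z y, ENNReal.ofReal ((g s) ^ 2) := by
            rw [lintegral_add_left measurable_const,
              lintegral_const_mul' _ _ ENNReal.ofReal_ne_top, setLIntegral_const]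
        _ ≤ ENNReal.ofReal (c / 2) * ENNReal.ofReal u
              + ENNReal.ofReal (1 / (2 * c)) * (ENNReal.ofReal (1 / (2 * ε)) * M) := by
            gcongr
            rw [Real.volume_Ioc]
            exact ENNReal.ofReal_le_ofReal (by simp only [hudef]; linarith [hzx₀])
        _ = ENNReal.ofReal (Real.sqrt u / 2 * (1 + A)) := by
            rw [← ENNReal.ofReal_toReal hM.ne,
              ← ENNReal.ofReal_mul (by positivity), ← ENNReal.ofReal_mul (by positivity),
              ← ENNReal.ofReal_mul (by positivity),
              ← ENNReal.ofReal_add (by positivity) (by positivity)]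
            congr 1
            rw [hcu, h2c, hA']
            ring
    have hgaem : AEMeasurable g (volume.restrict (Ioc z y)) := by
      refine AEMeasurable.div ((measurable_deriv d).aemeasurable) ?_
      exact (continuousOn_const.mul (Real.continuous_sqrt.comp_continuousOn
        (hd_cont.mono hsub2))).aemeasurable measurableSet_Ioc
    have hgfin : ∫⁻ s in Ioc z y, ENNReal.ofReal |g s| < ⊤ :=
      lt_of_le_of_lt hIle ENNReal.ofReal_lt_top
    have hgint : IntegrableOn g (Ioc z y) := by
      constructor
      · exact hgaem.aestronglyMeasurable
      · rw [hasFiniteIntegral_iff_norm]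
        simpa [Real.norm_eq_abs] using hgfin
    have hgii : IntervalIntegrable g volume z y :=
      (intervalIntegrable_iff_integrableOn_Ioc_of_le hzy.le).mpr hgint
    have hfcont : ContinuousOn (fun s => Real.sqrt (d s)) (Icc z y) :=
      Real.continuous_sqrt.comp_continuousOn
        (hd_cont.mono (Icc_subset_Icc (hx₀.1.trans hzx₀) hysub.2))
    have hFTC : ∫ s in z..y, g s = Real.sqrt (d y) - Real.sqrt (d z) :=
      intervalIntegral.integral_eq_sub_of_hasDeriv_right_of_le hzy.le hfcont
        (fun s hs => (hderiv s hs).hasDerivWithinAt) hgii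
    have hml : ∫ s in z..y, g s ≤ ∫ s in Ioc z y, |g s| := by
      rw [intervalIntegral.integral_of_le hzy.le]
      calc ∫ s in Ioc z y, g s ≤ |∫ s in Ioc z y, g s| := le_abs_self _
        _ ≤ ∫ s in Ioc z y, |g s| := by
            simpa [Real.norm_eq_abs] using
              norm_integral_le_integral_norm (μ := volume.restrict (Ioc z y)) g
    have heq : ∫ s in Ioc z y, |g s| = (∫⁻ s in Ioc z y, ENNReal.ofReal |g s|).toReal := by
      rw [integral_eq_lintegral_of_nonneg_ae
        (Filter.Eventually.of_forall fun s => abs_nonneg (g s))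
        (hgaem.aestronglyMeasurable.norm.congr
          (Filter.Eventually.of_forall fun s => (Real.norm_eq_abs (g s))))]
    have hsd : Real.sqrt (d y) ≤ Real.sqrt u / 2 * (1 + A) := by
      have h1 : Real.sqrt (d y) = ∫ s in z..y, g s := by
        rw [hFTC, hdz, Real.sqrt_zero, sub_zero]
      rw [h1]
      refine hml.trans ?_
      rw [heq]
      refine (ENNReal.toReal_mono ENNReal.ofReal_ne_top hIle).trans ?_
      rw [ENNReal.toReal_ofReal (by positivity)]
    have hdy2 : d y ≤ (Real.sqrt u / 2 * (1 + A)) ^ 2 := by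
      calc d y = Real.sqrt (d y) ^ 2 := (Real.sq_sqrt hdy.le).symm
        _ ≤ (Real.sqrt u / 2 * (1 + A)) ^ 2 :=
            pow_le_pow_left₀ (Real.sqrt_nonneg _) hsd 2
    have hfinal : (Real.sqrt u / 2 * (1 + A)) ^ 2 = K * u := by
      rw [hKdef, mul_pow, div_pow, Real.sq_sqrt hu.le]
      ring
    rw [hfinal] at hdy2
    exact hdy2
  -- final contradiction
  have hcomp : ∀ y ∈ Ioo x₀ t, ENNReal.ofReal ((y - x₀)⁻¹)
      ≤ ENNReal.ofReal K * (ENNReal.ofReal (d y))⁻¹ := by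
    intro y hy
    have hysub : y ∈ Icc a b := ⟨hx₀.1.trans hy.1.le, (hy.2.le.trans htb)⟩
    rcases (hd_nonneg y hysub).eq_or_lt with hdy | hdy
    · rw [← hdy]
      simp only [ENNReal.ofReal_zero, ENNReal.inv_zero]
      rw [ENNReal.mul_top (by simpa using hKpos.not_ge)]
      exact le_top
    · have hyx : 0 < y - x₀ := by linarith [hy.1]
      have h1 : (y - x₀)⁻¹ ≤ K * (d y)⁻¹ := by
        rw [inv_eq_one_div, show K * (d y)⁻¹ = K / d y from (div_eq_mul_inv K (d y)).symm,
          div_le_div_iff₀ hyx hdy]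
        linarith [hclaim y hy]
      calc ENNReal.ofReal ((y - x₀)⁻¹) ≤ ENNReal.ofReal (K * (d y)⁻¹) :=
            ENNReal.ofReal_le_ofReal h1
        _ = ENNReal.ofReal K * ENNReal.ofReal ((d y)⁻¹) :=
            ENNReal.ofReal_mul hKpos.le
        _ = ENNReal.ofReal K * (ENNReal.ofReal (d y))⁻¹ := by
            rw [ENNReal.ofReal_inv_of_pos hdy]
  have hfin : (∫⁻ y in Ioo x₀ t, ENNReal.ofReal ((y - x₀)⁻¹)) < ⊤ := by
    calc (∫⁻ y in Ioo x₀ t, ENNReal.ofReal ((y - x₀)⁻¹))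
        ≤ ∫⁻ y in Ioo x₀ t, ENNReal.ofReal K * (ENNReal.ofReal (d y))⁻¹ :=
          setLIntegral_mono' measurableSet_Ioo hcomp
      _ = ENNReal.ofReal K * ∫⁻ y in Ioo x₀ t, (ENNReal.ofReal (d y))⁻¹ :=
          lintegral_const_mul' _ _ ENNReal.ofReal_ne_top
      _ ≤ ENNReal.ofReal K * ∫⁻ y in Ioo a b, (ENNReal.ofReal (d y))⁻¹ := by
          gcongr
          exact hx₀.1
      _ < ⊤ := ENNReal.mul_lt_top ENNReal.ofReal_lt_top hd_int
  have hInt : IntegrableOn (fun y => (y - x₀)⁻¹) (Ioo x₀ t) := by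
    constructor
    · exact ((measurable_id.sub_const x₀).inv).aestronglyMeasurable
    · rw [hasFiniteIntegral_iff_norm]
      have : ∫⁻ y in Ioo x₀ t, ENNReal.ofReal ‖(y - x₀)⁻¹‖
          = ∫⁻ y in Ioo x₀ t, ENNReal.ofReal ((y - x₀)⁻¹) := by
        refine setLIntegral_congr_fun measurableSet_Ioo ?_
        intro y hy
        dsimp only
        rw [Real.norm_eq_abs, abs_of_nonneg (inv_nonneg.mpr (by linarith [hy.1]))]
      rw [this]
      exact hfin
  have : IntervalIntegrable (fun y => (y - x₀)⁻¹) volume x₀ t := by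
    rw [intervalIntegrable_iff_integrableOn_Ioc_of_le hx₀t.le,
      integrableOn_Ioc_iff_integrableOn_Ioo]
    exact hInt
  rcases intervalIntegrable_sub_inv_iff.1 this with h | h
  · exact absurd h hx₀t.ne
  · exact h (left_mem_uIcc)

theorem stmt_5
    (a b : ℝ) (hab : a < b)
    (d : ℝ → ℝ)
    (hd_cont : ContinuousOn d (Set.Icc a b))
    (hd_nonneg : ∀ x ∈ Set.Icc a b, 0 ≤ d x)
    (hd_C1 : ContDiffOn ℝ 1 d {x ∈ Set.Icc a b | 0 < d x})
    (hd_int : (∫⁻ x in Set.Ioo a b, (ENNReal.ofReal (d x))⁻¹) < ⊤)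
    (w₀ : ℝ → ℝ)
    (hw₀_cont : ContinuousOn w₀ (Set.Icc a b))
    (hw₀_nonneg : ∀ x ∈ Set.Icc a b, 0 ≤ w₀ x)
    (hw₀d : (∫⁻ x in Set.Ioo a b, ENNReal.ofReal ((deriv d x) ^ 2 / d x * w₀ x)) < ⊤) :
    ∀ x ∈ Set.Icc a b, d x = 0 → w₀ x = 0 := by
  intro x hx hdx
  by_cases hxb : x < b
  · exact key_side a b hab d hd_cont hd_nonneg hd_C1 hd_int w₀ hw₀_cont hw₀_nonneg hw₀d
      x hx hxb hdx
  · have hxb' : x = b := le_antisymm hx.2 (not_lt.mp hxb)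
    rw [hxb'] at hdx ⊢
    have hmaps : MapsTo (Neg.neg : ℝ → ℝ) (Icc (-b) (-a)) (Icc a b) := fun s hs =>
      ⟨by linarith [hs.2], by linarith [hs.1]⟩
    have hmp := Measure.measurePreserving_neg (volume : Measure ℝ)
    have hemb : MeasurableEmbedding (Neg.neg : ℝ → ℝ) := measurableEmbedding_neg
    have himg : (Neg.neg : ℝ → ℝ) '' Ioo (-b) (-a) = Ioo a b := by
      simp [Set.image_neg]
    have key := key_side (-b) (-a) (by linarith) (fun s => d (-s))
      (hd_cont.comp continuous_neg.continuousOn hmaps)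
      (fun s hs => hd_nonneg (-s) (hmaps hs))
      (hd_C1.comp contDiff_neg.contDiffOn (fun s hs => ⟨hmaps hs.1, hs.2⟩))
      (by
        rw [hmp.setLIntegral_comp_emb hemb (fun x => (ENNReal.ofReal (d x))⁻¹)
          (Ioo (-b) (-a)), himg]
        exact hd_int)
      (fun s => w₀ (-s))
      (hw₀_cont.comp continuous_neg.continuousOn hmaps)
      (fun s hs => hw₀_nonneg (-s) (hmaps hs))
      (by
        have heq : (∫⁻ s in Ioo (-b) (-a),
              ENNReal.ofReal ((deriv (fun x => d (-x)) s) ^ 2 / d (-s) * w₀ (-s)))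
            = ∫⁻ s in Ioo (-b) (-a),
              ENNReal.ofReal ((deriv d (-s)) ^ 2 / d (-s) * w₀ (-s)) :=
          lintegral_congr (fun s => by rw [deriv_comp_neg]; ring_nf)
        rw [heq, hmp.setLIntegral_comp_emb hemb
          (fun x => ENNReal.ofReal ((deriv d x) ^ 2 / d x * w₀ x)) (Ioo (-b) (-a)), himg]
        exact hw₀d)
      (-b) ⟨le_refl _, by linarith⟩ (by linarith) (by simp only [neg_neg]; exact hdx)
    simpa using key
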